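/- Let P = Σ_{i=0}^n a_i X^i be a polynomial of degree n over a complete discrete valuation field K whose Newton polygon has an extremal point at abscissa d with 0 < d < n. Define A₀ = Σ_{i=0}^d a_i X^i, V₀ = 1, and recursively A_{i+1} = A_i + (V_i·P mod A_i), B_{i+1} = P div A_{i+1}, V_{i+1} = (2V_i − V_i² B_{i+1}) mod A_{i+1}. Then the sequence (A_i) converges (coefficientwise in the valuation topology) to a divisor A_∞ of P of degree d whose leading coefficient is a_d and whose Newton function equals NF(P) restricted to [0,d]. -/

import Mathlib

open Polynomial Set

noncomputable section

variable {K : Type*} [Field K]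

/-- Map `WithTop ℤ` into `EReal`. -/
def toE : WithTop ℤ → EReal := WithTop.recTopCoe ⊤ (fun n => ((n : ℝ) : EReal))

lemma toE_top : toE ⊤ = ⊤ := rfl
lemma toE_coe (n : ℤ) : toE (n : WithTop ℤ) = ((n:ℝ) : EReal) := rfl

lemma toE_ne_bot (w : WithTop ℤ) : toE w ≠ ⊥ := by
  induction w using WithTop.recTopCoe with
  | top => simp [toE_top]
  | coe n => simp [toE_coe]

lemma toE_mono {a b : WithTop ℤ} (h : a ≤ b) : toE a ≤ toE b := by
  induction b using WithTop.recTopCoe with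
  | top => simp [toE_top]
  | coe n =>
    induction a using WithTop.recTopCoe with
    | top => simp at h
    | coe m =>
      rw [toE_coe, toE_coe]
      have : m ≤ n := by exact_mod_cast h
      exact_mod_cast (by exact_mod_cast this : (m:ℝ) ≤ n)

lemma toE_le_iff {a b : WithTop ℤ} : toE a ≤ toE b ↔ a ≤ b := by
  constructor
  · intro h
    induction a using WithTop.recTopCoe with
    | top =>
      induction b using WithTop.recTopCoe with
      | top => simp
      | coe n => simp [toE_top, toE_coe] at h
    | coe m =>
      induction b using WithTop.recTopCoe with
      | top => simp
      | coe n =>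
        rw [toE_coe, toE_coe] at h
        have : (m:ℝ) ≤ n := by exact_mod_cast h
        exact_mod_cast this
  · exact toE_mono

lemma toE_add (a b : WithTop ℤ) : toE (a + b) = toE a + toE b := by
  induction a using WithTop.recTopCoe with
  | top => rw [top_add, toE_top]; exact (EReal.top_add_of_ne_bot (toE_ne_bot _)).symm
  | coe m =>
    induction b using WithTop.recTopCoe with
    | top =>
      rw [add_top, toE_top]
      exact (EReal.add_top_of_ne_bot (toE_ne_bot _)).symm
    | coe n =>
      rw [← WithTop.coe_add, toE_coe, toE_coe, toE_coe]
      push_cast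
      rfl

lemma int_le_toE (M : ℤ) (w : WithTop ℤ) : ((M:ℝ):EReal) ≤ toE w ↔ (M : WithTop ℤ) ≤ w := by
  rw [← toE_coe, toE_le_iff]

variable (v : AddValuation K (WithTop ℤ))

def nu (x : K) : EReal := toE (v x)

lemma nu_zero : nu v 0 = ⊤ := by rw [nu, v.map_zero, toE_top]
lemma nu_one : nu v 1 = ((0:ℝ):EReal) := by
  rw [nu, v.map_one]
  exact_mod_cast toE_coe 0
lemma nu_mul (x y : K) : nu v (x*y) = nu v x + nu v y := by
  rw [nu, v.map_mul, toE_add]; rfl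
lemma nu_ne_bot (x : K) : nu v x ≠ ⊥ := toE_ne_bot _
lemma min_le_nu_add (x y : K) : min (nu v x) (nu v y) ≤ nu v (x + y) := by
  have h := toE_mono (v.map_add x y)
  refine le_trans ?_ h
  rcases le_total (v x) (v y) with h1 | h1
  · rw [min_eq_left h1]; exact min_le_of_left_le (le_refl _)
  · rw [min_eq_right h1]; exact min_le_of_right_le (le_refl _)

lemma nu_eq_top_iff (x : K) : nu v x = ⊤ ↔ x = 0 := by
  constructor
  · intro h
    by_contra hx
    have h1 : v (x * x⁻¹) = v x + v x⁻¹ := v.map_mul _ _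
    rw [mul_inv_cancel₀ hx, v.map_one] at h1
    have hvx : v x = ⊤ := by
      have ht : toE (v x) = ⊤ := h
      by_contra hne
      rcases WithTop.ne_top_iff_exists.mp hne with ⟨a, ha⟩
      rw [← ha, toE_coe] at ht
      exact absurd ht (by simp)
    rw [hvx, top_add] at h1
    exact absurd h1.symm (by simp)
  · intro h; rw [h]; exact nu_zero v

lemma nu_neg (x : K) : nu v (-x) = nu v x := by
  rcases eq_or_ne x 0 with rfl | hx
  · simp
  · have := nu_mul v (-1) x
    rw [neg_one_mul] at this
    rw [this]
    have h1 : nu v (-1) + nu v (-1) = nu v 1 := by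
      rw [← nu_mul]; norm_num
    rw [nu_one] at h1
    -- nu v (-1) = 0
    have hb : nu v (-1) ≠ ⊥ := nu_ne_bot v _
    have ht : nu v (-1) ≠ ⊤ := by
      intro h
      rw [nu_eq_top_iff] at h
      norm_num at h
    lift nu v (-1) to ℝ using ⟨ht, hb⟩ with r hr
    have : r + r = 0 := by exact_mod_cast h1
    have : r = 0 := by linarith
    rw [this]
    simp

lemma nu_add_eq_left {x y : K} (h : nu v x < nu v y) : nu v (x + y) = nu v x := by
  have h1 : nu v x ≤ nu v (x + y) := by
    have := min_le_nu_add v x y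
    rwa [min_eq_left h.le] at this
  have h2 : nu v (x + y) ≤ nu v x := by
    by_contra hc
    push_neg at hc
    have hx : x = (x + y) + (-y) := by ring
    have h3 : min (nu v (x+y)) (nu v (-y)) ≤ nu v x := by
      rw [hx] at h1 ⊢
      nth_rewrite 2 [hx]
      exact min_le_nu_add v _ _
    rw [nu_neg] at h3
    rcases le_total (nu v (x+y)) (nu v y) with hle | hle
    · rw [min_eq_left hle] at h3; exact absurd h3 (not_le.mpr hc)
    · rw [min_eq_right hle] at h3; exact absurd h3 (not_le.mpr h)
  exact le_antisymm h2 h1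

lemma le_nu_sum {ι : Type*} {r : EReal} {s : Finset ι} (f : ι → K) (h : ∀ i ∈ s, r ≤ nu v (f i)) :
    r ≤ nu v (∑ i ∈ s, f i) := by
  classical
  induction s using Finset.induction with
  | empty => simp [nu_zero v]
  | @insert a s' hx ih =>
    rw [Finset.sum_insert hx]
    refine le_trans (le_min (h a (Finset.mem_insert_self a s')) ?_) (min_le_nu_add v _ _)
    exact ih (fun i hi => h i (Finset.mem_insert_of_mem hi))

lemma ereal_eq_top_of_forall_real {x : EReal} (h : ∀ r : ℝ, (r:EReal) ≤ x) : x = ⊤ := by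
  by_contra hx
  rcases EReal.exists_between_coe_real (Ne.lt_top hx) with ⟨y, h1, h2⟩
  exact absurd (h y) (not_le.mpr h1)

lemma ereal_le_of_forall_lt_real {r : ℝ} {x : EReal}
    (h : ∀ ε : ℝ, 0 < ε → ((r - ε : ℝ) : EReal) ≤ x) : (r:EReal) ≤ x := by
  by_contra hc
  push_neg at hc
  rcases EReal.exists_between_coe_real hc with ⟨y, h1, h2⟩
  have hy : (0:ℝ) < r - y := by
    have : (y:ℝ) < r := by exact_mod_cast h2
    linarith
  have := h (r - y) hy
  simp only [sub_sub_cancel] at this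
  exact absurd this (not_le.mpr h1)

/-! ### WG predicate: `WG v mu Q ρ` means every coefficient satisfies `ν(q_j) ≥ ρ + mu·j`. -/

def WG (mu : ℝ) (Q : K[X]) (ρ : ℝ) : Prop :=
  ∀ j : ℕ, ((ρ + mu * j : ℝ) : EReal) ≤ nu v (Q.coeff j)

variable {v}

lemma WG_zero (mu ρ : ℝ) : WG v mu 0 ρ := by
  intro j; simp [nu_zero v]

lemma WG_mono {mu ρ : ℝ} {Q : K[X]} (h : WG v mu Q ρ) {ρ' : ℝ} (hle : ρ' ≤ ρ) :
    WG v mu Q ρ' := by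
  intro j
  refine le_trans ?_ (h j)
  exact_mod_cast EReal.coe_le_coe_iff.mpr (by linarith)

lemma WG_add {mu ρ : ℝ} {Q R : K[X]} (hQ : WG v mu Q ρ) (hR : WG v mu R ρ) :
    WG v mu (Q + R) ρ := by
  intro j
  rw [coeff_add]
  exact le_trans (le_min (hQ j) (hR j)) (min_le_nu_add v _ _)

lemma WG_neg {mu ρ : ℝ} {Q : K[X]} (hQ : WG v mu Q ρ) : WG v mu (-Q) ρ := by
  intro j
  rw [coeff_neg, nu_neg]
  exact hQ j

lemma WG_sub {mu ρ : ℝ} {Q R : K[X]} (hQ : WG v mu Q ρ) (hR : WG v mu R ρ) :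
    WG v mu (Q - R) ρ := by
  rw [sub_eq_add_neg]; exact WG_add hQ (WG_neg hR)

lemma WG_mul {mu ρ τ : ℝ} {Q R : K[X]} (hQ : WG v mu Q ρ) (hR : WG v mu R τ) :
    WG v mu (Q * R) (ρ + τ) := by
  intro j
  rw [coeff_mul]
  refine le_nu_sum v _ (fun p hp => ?_)
  rw [Finset.HasAntidiagonal.mem_antidiagonal] at hp
  rw [nu_mul]
  have h1 := hQ p.1
  have h2 := hR p.2
  have := add_le_add h1 h2
  rw [← EReal.coe_add] at this
  refine le_trans ?_ this
  apply EReal.coe_le_coe_iff.mpr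
  have : ((p.1 + p.2 : ℕ) : ℝ) = (p.1 : ℝ) + (p.2 : ℝ) := by push_cast; ring
  rw [← hp]
  rw [this]
  ring_nf
  exact le_refl _

lemma WG_one (mu : ℝ) : WG v mu 1 0 := by
  intro j
  rcases Nat.eq_zero_or_pos j with rfl | hj
  · simp [coeff_one, nu_one v]
  · rw [coeff_one, if_neg (by omega)]
    simp [nu_zero v]

lemma WG_C_mul_X_pow {mu ρ : ℝ} {k : K} {m : ℕ} (h : ((ρ + mu * m : ℝ):EReal) ≤ nu v k) :
    WG v mu (C k * X ^ m) ρ := by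
  intro j
  rw [coeff_C_mul, coeff_X_pow]
  by_cases hjm : j = m
  · subst hjm; simpa using h
  · rw [if_neg hjm, mul_zero]
    simp [nu_zero v]

/-! ### Euclidean division uniqueness and algebra -/

lemma divmod_unique {A q r S : K[X]} (hA : A ≠ 0) (hS : S = A * q + r)
    (hr : r.degree < A.degree) : S / A = q ∧ S % A = r := by
  have h1 : A * (S / A) + S % A = S := EuclideanDomain.div_add_mod S A
  have hmodlt : (S % A).degree < A.degree := EuclideanDomain.mod_lt S hA
  have hq : S / A = q := by
    by_contra hne
    have hne' : S / A - q ≠ 0 := sub_ne_zero.mpr hne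
    have hsub : A * (S / A - q) = r - S % A := by
      have := h1.trans hS
      ring_nf
      ring_nf at this
      linear_combination this
    have hlhs : A.degree ≤ (A * (S / A - q)).degree := degree_le_mul_left A hne'
    rw [hsub] at hlhs
    have hrhs : (r - S % A).degree < A.degree :=
      lt_of_le_of_lt (degree_sub_le _ _) (max_lt hr hmodlt)
    exact absurd hlhs (not_le.mpr hrhs)
  refine ⟨hq, ?_⟩
  rw [hq] at h1
  have := h1.trans hS
  exact add_left_cancel this

lemma mod_add_mul_self {A x y : K[X]} (hA : A ≠ 0) : (x + A * y) % A = x % A := by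
  have h1 : A * (x / A) + x % A = x := EuclideanDomain.div_add_mod x A
  have hmodlt : (x % A).degree < A.degree := EuclideanDomain.mod_lt x hA
  have : x + A * y = A * (x / A + y) + x % A := by rw [mul_add]; linear_combination -h1
  exact (divmod_unique hA this hmodlt).2

lemma div_add_mul_self {A x y : K[X]} (hA : A ≠ 0) : (x + A * y) / A = x / A + y := by
  have h1 : A * (x / A) + x % A = x := EuclideanDomain.div_add_mod x A
  have hmodlt : (x % A).degree < A.degree := EuclideanDomain.mod_lt x hA
  have : x + A * y = A * (x / A + y) + x % A := by rw [mul_add]; linear_combination -h1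
  exact (divmod_unique hA this hmodlt).1

lemma ereal_le_add_coe {x : EReal} {r s : ℝ} (h : ((s + r:ℝ):EReal) ≤ x + (r:EReal)) :
    (s:EReal) ≤ x := by
  induction x with
  | bot =>
    exfalso
    rw [EReal.bot_add] at h
    exact absurd h (by simp)
  | coe y =>
    rw [← EReal.coe_add] at h
    have : s + r ≤ y + r := by exact_mod_cast h
    exact EReal.coe_le_coe_iff.mpr (by linarith)
  | top => exact le_top

lemma nu_ne_top_of_eq_coe {x : K} {c : ℝ} (h : nu v x = ((c:ℝ):EReal)) : x ≠ 0 := by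
  intro hx
  rw [hx, nu_zero] at h
  exact absurd h.symm (by simp)

lemma WG_mod_div {mu c : ℝ} {A : K[X]} {d : ℕ} (hd : 0 < d) (hdeg : A.natDegree = d)
    (hc : nu v (A.coeff d) = ((c:ℝ):EReal)) (hWA : WG v mu A (c - mu*d)) :
    ∀ S : K[X], ∀ u : ℝ, WG v mu S u →
      WG v mu (S % A) u ∧ WG v mu (S / A) (u - (c - mu*d)) := by
  have hAd : A.coeff d ≠ 0 := nu_ne_top_of_eq_coe hc
  have hA0 : A ≠ 0 := fun h => hAd (by rw [h, coeff_zero])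
  have hAdeg : A.degree = (d : WithBot ℕ) := by
    rw [degree_eq_natDegree hA0, hdeg]
  suffices key : ∀ m : ℕ, ∀ S : K[X], S.natDegree < m → ∀ u : ℝ, WG v mu S u →
      WG v mu (S % A) u ∧ WG v mu (S / A) (u - (c - mu*d)) by
    intro S u hS
    exact key (S.natDegree + 1) S (Nat.lt_succ_self _) u hS
  intro m
  induction m with
  | zero => intro S hS; omega
  | succ m ih =>
    intro S hSm u hS
    by_cases hlt : S.degree < A.degree
    · obtain ⟨hdiv, hmod⟩ := divmod_unique hA0 (by ring : S = A * 0 + S) hlt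
      rw [hdiv, hmod]
      exact ⟨hS, WG_zero _ _⟩
    · push_neg at hlt
      have hSne : S ≠ 0 := by
        intro h
        rw [h, degree_zero, le_bot_iff, hAdeg] at hlt
        exact absurd hlt (by simp)
      have hSdeg : S.degree = (S.natDegree : WithBot ℕ) := degree_eq_natDegree hSne
      set m' := S.natDegree with hm'
      have hm'd : d ≤ m' := by
        rw [hAdeg, hSdeg] at hlt
        exact_mod_cast hlt
      set e := m' - d with he
      have hed : e + d = m' := by omega
      set k := S.coeff m' / A.coeff d with hk
      have hkAd : k * A.coeff d = S.coeff m' := by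
        rw [hk]; exact div_mul_cancel₀ _ hAd
      have hSm' : S.coeff m' ≠ 0 := by
        rw [hm']; exact leadingCoeff_ne_zero.mpr hSne
      have hkne : k ≠ 0 := by
        intro h
        rw [h, zero_mul] at hkAd
        exact hSm' hkAd.symm
      -- valuation of k
      have hnuk : ((u + mu * m' - c : ℝ):EReal) ≤ nu v k := by
        have h1 : nu v k + (c:EReal) = nu v (S.coeff m') := by
          rw [← hc, ← nu_mul, hkAd]
        have h2 := hS m'
        rw [← h1] at h2
        refine ereal_le_add_coe (r := c) ?_
        refine le_trans ?_ h2
        exact EReal.coe_le_coe_iff.mpr (by ring_nf; exact le_refl _)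
      have hmono : WG v mu (C k * X ^ e) (u - (c - mu*d)) := by
        refine WG_C_mul_X_pow ?_
        refine le_trans ?_ hnuk
        apply EReal.coe_le_coe_iff.mpr
        have : ((e:ℕ):ℝ) = (m' : ℝ) - (d:ℝ) := by
          rw [he]
          push_cast [hm'd]
          ring
        rw [this]
        ring_nf
        exact le_refl _
      have hsubWG : WG v mu (C k * X ^ e * A) u := by
        have := WG_mul hmono hWA
        exact WG_mono this (by linarith)
      set T := S - C k * X ^ e * A with hT
      have hTWG : WG v mu T u := WG_sub hS hsubWG
      -- degree T < degree S
      have hqdeg : (C k * X ^ e * A).degree = S.degree := by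
        rw [degree_mul, degree_mul, degree_C hkne, degree_X_pow, hAdeg, hSdeg, zero_add]
        exact_mod_cast congrArg (Nat.cast : ℕ → WithBot ℕ) hed
      have hqlc : (C k * X ^ e * A).leadingCoeff = S.leadingCoeff := by
        rw [leadingCoeff_mul, leadingCoeff_mul, leadingCoeff_C, leadingCoeff_X_pow, mul_one]
        have hAl : A.leadingCoeff = A.coeff d := by rw [leadingCoeff, hdeg]
        have hSl : S.leadingCoeff = S.coeff m' := rfl
        rw [hAl, hSl, hkAd]
      have hTdeg : T.degree < S.degree := by
        rw [hT]
        exact degree_sub_lt hqdeg.symm hSne hqlc.symm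
      have hTnat : T.natDegree < m := by
        by_cases hT0 : T = 0
        · rw [hT0, natDegree_zero]
          omega
        · have := natDegree_lt_natDegree hT0 hTdeg
          omega
      obtain ⟨ihmod, ihdiv⟩ := ih T hTnat u hTWG
      have hrepr : S = A * (T / A + C k * X ^ e) + T % A := by
        have h1 : A * (T / A) + T % A = T := EuclideanDomain.div_add_mod T A
        rw [mul_add]
        rw [hT] at h1
        linear_combination -h1
      obtain ⟨hdiv, hmod⟩ := divmod_unique hA0 hrepr (EuclideanDomain.mod_lt T hA0)
      rw [hdiv, hmod]
      exact ⟨ihmod, WG_add ihdiv hmono⟩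

/-! ### Newton function facts -/

/-- Newton function of a polynomial: the largest convex function lying below the
points `(i, val aᵢ)`, realized as the sup of affine minorants. -/
def NF (v : AddValuation K (WithTop ℤ)) (P : K[X]) (x : ℝ) : EReal :=
  sSup {y : EReal | ∃ a b : ℝ,
    (∀ i : ℕ, i ≤ P.natDegree → ((a * (i : ℝ) + b : ℝ) : EReal) ≤ toE (v (P.coeff i))) ∧
    y = ((a * x + b : ℝ) : EReal)}

variable {P : K[X]}

lemma minorant_le_NF {a b : ℝ} (x : ℝ)
    (h : ∀ i : ℕ, i ≤ P.natDegree → ((a * (i:ℝ) + b : ℝ) : EReal) ≤ nu v (P.coeff i)) :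
    ((a * x + b : ℝ) : EReal) ≤ NF v P x :=
  le_sSup ⟨a, b, h, rfl⟩

lemma NF_le_nu {t : ℕ} (ht : t ≤ P.natDegree) : NF v P t ≤ nu v (P.coeff t) := by
  refine sSup_le ?_
  rintro y ⟨a, b, hm, rfl⟩
  exact hm t ht

lemma exists_minorant_near (x r ε : ℝ) (hε : 0 < ε) (hr : (r : EReal) ≤ NF v P x) :
    ∃ a b : ℝ, (∀ i : ℕ, i ≤ P.natDegree → ((a * (i:ℝ) + b : ℝ) : EReal) ≤ nu v (P.coeff i))
      ∧ r - ε < a * x + b := by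
  have h1 : ((r - ε : ℝ) : EReal) < NF v P x :=
    lt_of_lt_of_le (EReal.coe_lt_coe_iff.mpr (by linarith)) hr
  rw [NF, lt_sSup_iff] at h1
  obtain ⟨y, ⟨a, b, hm, rfl⟩, hlt⟩ := h1
  exact ⟨a, b, hm, by exact_mod_cast hlt⟩

section NFBounds

variable {d : ℕ} {c lam0 lam1 : ℝ}

lemma M1bound (hd0 : 0 < d) (hdn : d ≤ P.natDegree)
    (hvd : NF v P (d:ℝ) = ((c:ℝ):EReal))
    (hvleft : NF v P ((d:ℝ) - 1) = ((c - lam0 : ℝ):EReal)) :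
    ∀ t : ℕ, ((c + lam0 * ((t:ℝ) - d) : ℝ) : EReal) ≤ nu v (P.coeff t) := by
  intro t
  by_cases htn : t ≤ P.natDegree
  swap
  · push_neg at htn
    rw [coeff_eq_zero_of_natDegree_lt htn, nu_zero]
    exact le_top
  rcases le_or_gt d t with hdt | htd
  · -- t ≥ d : use near-optimal minorant at d
    apply ereal_le_of_forall_lt_real
    intro ε0 hε0
    have hden : (0:ℝ) < 1 + ((t:ℝ) - d) := by
      have : (d:ℝ) ≤ t := by exact_mod_cast hdt
      linarith
    set ε := ε0 / (1 + ((t:ℝ) - d)) with hε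
    have hεpos : 0 < ε := div_pos hε0 hden
    obtain ⟨a, b, hm, hab⟩ := exists_minorant_near (v := v) (d:ℝ) c ε hεpos (le_of_eq hvd.symm)
    have h1 : a * ((d:ℝ) - 1) + b ≤ c - lam0 := by
      have := minorant_le_NF (v := v) ((d:ℝ)-1) hm
      rw [hvleft] at this
      exact_mod_cast this
    have ha : lam0 - ε ≤ a := by nlinarith [hab, h1]
    refine le_trans ?_ (hm t htn)
    apply EReal.coe_le_coe_iff.mpr
    have htd' : (0:ℝ) ≤ (t:ℝ) - d := by
      have : (d:ℝ) ≤ t := by exact_mod_cast hdt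
      linarith
    have key : (lam0 - ε) * ((t:ℝ) - d) ≤ a * ((t:ℝ) - d) :=
      mul_le_mul_of_nonneg_right ha htd'
    have hεe : ε * (1 + ((t:ℝ) - d)) = ε0 := by
      rw [hε]; field_simp
    nlinarith [hab, key]
  · -- t < d : use near-optimal minorant at d - 1
    apply ereal_le_of_forall_lt_real
    intro ε0 hε0
    have hdpos : (0:ℝ) < d := by exact_mod_cast hd0
    set ε := ε0 / (d:ℝ) with hε
    have hεpos : 0 < ε := div_pos hε0 hdpos
    obtain ⟨a, b, hm, hab⟩ := exists_minorant_near (v := v) ((d:ℝ)-1) (c - lam0) ε hεpos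
      (le_of_eq hvleft.symm)
    have h1 : a * (d:ℝ) + b ≤ c := by
      have := minorant_le_NF (v := v) (d:ℝ) hm
      rw [hvd] at this
      exact_mod_cast this
    have ha : a ≤ lam0 + ε := by nlinarith [hab, h1]
    refine le_trans ?_ (hm t htn)
    apply EReal.coe_le_coe_iff.mpr
    have htd' : (t:ℝ) - ((d:ℝ) - 1) ≤ 0 := by
      have : (t:ℝ) + 1 ≤ d := by exact_mod_cast htd
      linarith
    have key : (lam0 + ε) * ((t:ℝ) - ((d:ℝ)-1)) ≤ a * ((t:ℝ) - ((d:ℝ)-1)) :=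
      mul_le_mul_of_nonpos_right ha htd'
    have htnn : (0:ℝ) ≤ t := by positivity
    have hεt : 0 ≤ ε * (t:ℝ) := mul_nonneg hεpos.le htnn
    have hεd : ε * (d:ℝ) = ε0 := by rw [hε]; field_simp
    nlinarith [hab, key, hεt, hεd]

lemma M2bound (hdn : d ≤ P.natDegree)
    (hvd : NF v P (d:ℝ) = ((c:ℝ):EReal))
    (hvright : NF v P ((d:ℝ) + 1) = ((c + lam1 : ℝ):EReal)) :
    ∀ t : ℕ, ((c + lam1 * ((t:ℝ) - d) : ℝ) : EReal) ≤ nu v (P.coeff t) := by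
  intro t
  by_cases htn : t ≤ P.natDegree
  swap
  · push_neg at htn
    rw [coeff_eq_zero_of_natDegree_lt htn, nu_zero]
    exact le_top
  rcases le_or_gt t d with htd | hdt
  · -- t ≤ d : use near-optimal minorant at d
    apply ereal_le_of_forall_lt_real
    intro ε0 hε0
    have hden : (0:ℝ) < (d:ℝ) + 1 := by positivity
    set ε := ε0 / ((d:ℝ) + 1) with hε
    have hεpos : 0 < ε := div_pos hε0 hden
    obtain ⟨a, b, hm, hab⟩ := exists_minorant_near (v := v) (d:ℝ) c ε hεpos (le_of_eq hvd.symm)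
    have h1 : a * ((d:ℝ) + 1) + b ≤ c + lam1 := by
      have := minorant_le_NF (v := v) ((d:ℝ)+1) hm
      rw [hvright] at this
      exact_mod_cast this
    have ha : a ≤ lam1 + ε := by nlinarith [hab, h1]
    refine le_trans ?_ (hm t htn)
    apply EReal.coe_le_coe_iff.mpr
    have htd' : (t:ℝ) - (d:ℝ) ≤ 0 := by
      have : (t:ℝ) ≤ d := by exact_mod_cast htd
      linarith
    have key : (lam1 + ε) * ((t:ℝ) - (d:ℝ)) ≤ a * ((t:ℝ) - (d:ℝ)) :=
      mul_le_mul_of_nonpos_right ha htd'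
    have htnn : (0:ℝ) ≤ t := by positivity
    have hεt : 0 ≤ ε * (t:ℝ) := mul_nonneg hεpos.le htnn
    have hεd : ε * ((d:ℝ) + 1) = ε0 := by rw [hε]; field_simp
    nlinarith [hab, key, hεt, hεd]
  · -- t > d : use near-optimal minorant at d + 1
    apply ereal_le_of_forall_lt_real
    intro ε0 hε0
    have hden : (0:ℝ) < (t:ℝ) - d := by
      have : (d:ℝ) + 1 ≤ t := by exact_mod_cast hdt
      linarith
    set ε := ε0 / ((t:ℝ) - d) with hε
    have hεpos : 0 < ε := div_pos hε0 hden
    obtain ⟨a, b, hm, hab⟩ := exists_minorant_near (v := v) ((d:ℝ)+1) (c + lam1) ε hεpos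
      (le_of_eq hvright.symm)
    have h1 : a * (d:ℝ) + b ≤ c := by
      have := minorant_le_NF (v := v) (d:ℝ) hm
      rw [hvd] at this
      exact_mod_cast this
    have ha : lam1 - ε ≤ a := by nlinarith [hab, h1]
    refine le_trans ?_ (hm t htn)
    apply EReal.coe_le_coe_iff.mpr
    have htd' : (0:ℝ) ≤ (t:ℝ) - ((d:ℝ) + 1) := by
      have : (d:ℝ) + 1 ≤ t := by exact_mod_cast hdt
      linarith
    have key : (lam1 - ε) * ((t:ℝ) - ((d:ℝ)+1)) ≤ a * ((t:ℝ) - ((d:ℝ)+1)) :=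
      mul_le_mul_of_nonneg_right ha htd'
    have hεd : ε * ((t:ℝ) - d) = ε0 := by
      rw [hε]; field_simp
    nlinarith [hab, key, hεd, hεpos.le]

lemma vertex_exact (hd0 : 0 < d) (hdn : d ≤ P.natDegree) (hls : lam0 < lam1)
    (hvd : NF v P (d:ℝ) = ((c:ℝ):EReal))
    (hvleft : NF v P ((d:ℝ) - 1) = ((c - lam0 : ℝ):EReal))
    (hvright : NF v P ((d:ℝ) + 1) = ((c + lam1 : ℝ):EReal)) :
    nu v (P.coeff d) = ((c:ℝ):EReal) := by
  have hge : ((c:ℝ):EReal) ≤ nu v (P.coeff d) := by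
    rw [← hvd]; exact NF_le_nu (le_refl d |>.trans hdn)
  rcases eq_or_lt_of_le hge with heq | hgt
  · exact heq.symm
  exfalso
  obtain ⟨y, hy1, hy2⟩ := EReal.exists_between_coe_real hgt
  have hyc : c < y := by exact_mod_cast hy1
  set δ2 := (lam1 - lam0)/2 with hδ2
  have hδ2pos : 0 < δ2 := by rw [hδ2]; linarith
  set ε' := min δ2 (y - c) with hε'
  have hε'pos : 0 < ε' := lt_min hδ2pos (by linarith)
  set a := lam0 + δ2 with ha
  set b := c + ε' - a * d with hb
  have hmino : ∀ t : ℕ, t ≤ P.natDegree → ((a * (t:ℝ) + b : ℝ):EReal) ≤ nu v (P.coeff t) := by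
    intro t ht
    rcases lt_trichotomy t d with htd | htd | htd
    · refine le_trans ?_ (M1bound hd0 hdn hvd hvleft t)
      apply EReal.coe_le_coe_iff.mpr
      have h1 : (t:ℝ) + 1 ≤ d := by exact_mod_cast htd
      have h2 : ε' ≤ δ2 := min_le_left _ _
      nlinarith [h2, h1, hδ2pos]
    · subst htd
      refine le_trans ?_ hy2.le
      apply EReal.coe_le_coe_iff.mpr
      have h2 : ε' ≤ y - c := min_le_right _ _
      rw [hb]; ring_nf; linarith
    · refine le_trans ?_ (M2bound hdn hvd hvright t)
      apply EReal.coe_le_coe_iff.mpr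
      have h1 : (d:ℝ) + 1 ≤ t := by exact_mod_cast htd
      have h2 : ε' ≤ δ2 := min_le_left _ _
      have h3 : lam1 - a = δ2 := by rw [ha, hδ2]; ring
      nlinarith [h2, h1, hδ2pos]
  have := minorant_le_NF (v := v) (d:ℝ) hmino
  rw [hvd] at this
  have : a * (d:ℝ) + b ≤ c := by exact_mod_cast this
  rw [hb] at this
  linarith

lemma CVX0 (hd0 : 0 < d) (hdn : d ≤ P.natDegree)
    (hvd : NF v P (d:ℝ) = ((c:ℝ):EReal))
    (hvleft : NF v P ((d:ℝ) - 1) = ((c - lam0 : ℝ):EReal))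
    {i j : ℕ} (hij : i ≤ j) (hjd : j < d) {fj : ℝ} (hfj : NF v P (j:ℝ) = ((fj:ℝ):EReal)) :
    ((fj - lam0 * ((j:ℝ) - (i:ℝ)) : ℝ):EReal) ≤ NF v P (i:ℝ) := by
  have hfjlb : c + lam0 * ((j:ℝ) - d) ≤ fj := by
    have h1 : ((c + lam0 * ((j:ℝ) - d) : ℝ):EReal) ≤ NF v P (j:ℝ) := by
      have hm : ∀ t : ℕ, t ≤ P.natDegree →
          ((lam0 * (t:ℝ) + (c - lam0 * d) : ℝ):EReal) ≤ nu v (P.coeff t) := by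
        intro t ht
        refine le_trans (le_of_eq ?_) (M1bound hd0 hdn hvd hvleft t)
        congr 1
        ring
      have := minorant_le_NF (v := v) (j:ℝ) hm
      refine le_trans (le_of_eq ?_) this
      congr 1
      ring
    rw [hfj] at h1
    exact_mod_cast h1
  apply ereal_le_of_forall_lt_real
  intro ε0 hε0
  have hden : (0:ℝ) < 1 + ((j:ℝ) - i) := by
    have : (i:ℝ) ≤ j := by exact_mod_cast hij
    linarith
  set εs := ε0 / (1 + ((j:ℝ) - i)) with hεs
  have hεspos : 0 < εs := div_pos hε0 hden
  obtain ⟨a, b, hm, hab⟩ := exists_minorant_near (v := v) (j:ℝ) fj εs hεspos (le_of_eq hfj.symm)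
  have h1 : a * (d:ℝ) + b ≤ c := by
    have := minorant_le_NF (v := v) (d:ℝ) hm
    rw [hvd] at this
    exact_mod_cast this
  have hdj1 : (1:ℝ) ≤ (d:ℝ) - j := by
    have : (j:ℝ) + 1 ≤ d := by exact_mod_cast hjd
    linarith
  have hji0 : (0:ℝ) ≤ (j:ℝ) - i := by
    have : (i:ℝ) ≤ j := by exact_mod_cast hij
    linarith
  -- key slope bound : (a - lam0) * (d - j) ≤ εs
  have K1 : (a - lam0) * ((d:ℝ) - j) ≤ εs := by nlinarith [hab, h1, hfjlb]
  have key2 : a * ((j:ℝ) - i) ≤ lam0 * ((j:ℝ) - i) + εs * ((j:ℝ) - i) := by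
    rcases le_or_gt a lam0 with hal | hal
    · have := mul_le_mul_of_nonneg_right hal hji0
      nlinarith [mul_nonneg hεspos.le hji0]
    · have h3 : a - lam0 ≤ εs := by nlinarith [K1, hdj1, hal]
      nlinarith [mul_le_mul_of_nonneg_right h3 hji0]
  have hεse : εs * (1 + ((j:ℝ) - i)) = ε0 := by rw [hεs]; field_simp
  refine le_trans ?_ (minorant_le_NF (v := v) (i:ℝ) hm)
  apply EReal.coe_le_coe_iff.mpr
  nlinarith [hab, key2, hεse]

lemma chord_max {i j : ℕ} (hij : i ≤ j) (hjd : (j:ℝ) ≤ d)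
    (hvd : NF v P (d:ℝ) = ((c:ℝ):EReal)) :
    NF v P (j:ℝ) ≤ max (NF v P (i:ℝ)) ((c:ℝ):EReal) := by
  refine sSup_le ?_
  rintro y ⟨a, b, hm, rfl⟩
  rcases le_or_gt 0 a with ha | ha
  · refine le_max_of_le_right ?_
    have h1 := minorant_le_NF (v := v) (d:ℝ) hm
    rw [hvd] at h1
    refine le_trans ?_ h1
    apply EReal.coe_le_coe_iff.mpr
    have : (j:ℝ) ≤ d := hjd
    nlinarith
  · refine le_max_of_le_left ?_
    refine le_trans ?_ (minorant_le_NF (v := v) (i:ℝ) hm)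
    apply EReal.coe_le_coe_iff.mpr
    have : (i:ℝ) ≤ j := by exact_mod_cast hij
    nlinarith

end NFBounds


lemma ereal_coe_add_eq_self {r : ℝ} {x : EReal} (h : (r:EReal) + x = (r:EReal)) : x = ((0:ℝ):EReal) := by
  induction x with
  | bot => rw [EReal.add_bot] at h; exact absurd h.symm (by simp)
  | coe y =>
    rw [← EReal.coe_add] at h
    have : r + y = r := by exact_mod_cast h
    have : y = 0 := by linarith
    rw [this]
  | top =>
    rw [EReal.add_top_of_ne_bot (by simp : (r:EReal) ≠ ⊥)] at h
    exact absurd h.symm (by simp)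

/-- The invariant `b_φ(Q) = min_{0 ≤ x ≤ deg Q} (NF(Q)(x) − φ(x))`. -/
def bE (v : AddValuation K (WithTop ℤ)) (φ : ℝ → EReal) (Q : K[X]) : EReal :=
  sInf {y : EReal | ∃ x : ℝ, 0 ≤ x ∧ x ≤ (Q.natDegree : ℝ) ∧ y = NF v Q x - φ x}

set_option maxHeartbeats 4000000 in
/-- the Newton iteration `A₀ = Σ_{i≤d} aᵢXⁱ`, `V₀ = 1`,
`A_{i+1} = A_i + (V_i P mod A_i)`, `V_{i+1} = (2V_i − V_i²(P div A_{i+1})) mod A_{i+1}`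
converges coefficientwise to a divisor `A_∞` of `P` of degree `d`, with leading
coefficient `a_d` and Newton function `NF(P)|[0,d]`. -/
theorem stmt9 (v : AddValuation K (WithTop ℤ))
    (hcomplete : ∀ u : ℕ → K,
      (∀ M : ℤ, ∃ N : ℕ, ∀ p ≥ N, ∀ q ≥ N, (M : WithTop ℤ) ≤ v (u p - u q)) →
      ∃ l : K, ∀ M : ℤ, ∃ N : ℕ, ∀ p ≥ N, (M : WithTop ℤ) ≤ v (u p - l))
    (P : K[X]) (hP : P ≠ 0) (n d : ℕ) (hn : P.natDegree = n)
    (h0d : 0 < d) (hdn : d < n)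
    (c lam0 lam1 : ℝ) (hlt : lam0 < lam1)
    (hd : NF v P (d : ℝ) = ((c : ℝ) : EReal))
    (hleft : NF v P ((d : ℝ) - 1) = ((c - lam0 : ℝ) : EReal))
    (hright : NF v P ((d : ℝ) + 1) = ((c + lam1 : ℝ) : EReal))
    (A V : ℕ → K[X])
    (hA0 : A 0 = ∑ i ∈ Finset.range (d + 1), C (P.coeff i) * X ^ i)
    (hV0 : V 0 = 1)
    (hArec : ∀ i, A (i + 1) = A i + (V i * P) % A i)
    (hVrec : ∀ i, V (i + 1) = (2 * V i - (V i) ^ 2 * (P / A (i + 1))) % A (i + 1)) :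
    ∃ Ainf : K[X], Ainf ∣ P ∧ Ainf.natDegree = d ∧ Ainf.coeff d = P.coeff d ∧
      (∀ x ∈ Set.Icc (0 : ℝ) (d : ℝ), NF v Ainf x = NF v P x) ∧
      (∀ j : ℕ, ∀ M : ℤ, ∃ N : ℕ, ∀ i ≥ N, (M : WithTop ℤ) ≤ v ((A i - Ainf).coeff j)) := by
  classical
  have hdn' : d ≤ P.natDegree := by omega
  have hνd : nu v (P.coeff d) = ((c:ℝ):EReal) :=
    vertex_exact h0d hdn' hlt hd hleft hright
  have had : P.coeff d ≠ 0 := nu_ne_top_of_eq_coe hνd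
  set W0 : ℝ := c - lam0 * d with hW0
  set Δ : ℝ := lam1 - lam0 with hΔdef
  have hΔ : 0 < Δ := by rw [hΔdef]; linarith
  set η : ℕ → ℝ := fun i => Δ * ((i:ℝ) + 1) with hη
  have hηpos : ∀ i, 0 < η i := by
    intro i
    show 0 < Δ * ((i:ℝ) + 1)
    have : (0:ℝ) ≤ i := Nat.cast_nonneg i
    positivity
  have hηmono : ∀ i k : ℕ, i ≤ k → η i ≤ η k := by
    intro i k hik
    show Δ * ((i:ℝ) + 1) ≤ Δ * ((k:ℝ) + 1)
    have : (i:ℝ) ≤ k := by exact_mod_cast hik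
    nlinarith [hΔ]
  -- P is W0-dominated at slope lam0, with a gap of Δ above degree d
  have hWP : WG v lam0 P W0 := by
    intro j
    refine le_trans (le_of_eq ?_) (M1bound h0d hdn' hd hleft j)
    rw [hW0]; congr 1; ring
  have hM2 : ∀ t : ℕ, d < t → ((W0 + Δ + lam0 * (t:ℝ) : ℝ):EReal) ≤ nu v (P.coeff t) := by
    intro t ht
    refine le_trans ?_ (M2bound hdn' hd hright t)
    apply EReal.coe_le_coe_iff.mpr
    have h1 : (d:ℝ) + 1 ≤ t := by exact_mod_cast ht
    rw [hW0, hΔdef]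
    nlinarith [hlt]
  -- coefficients of A 0
  have hA0c : ∀ j, (A 0).coeff j = if j ≤ d then P.coeff j else 0 := by
    intro j
    rw [hA0, finset_sum_coeff]
    simp only [coeff_C_mul, coeff_X_pow, mul_ite, mul_one, mul_zero]
    rw [Finset.sum_ite_eq (Finset.range (d+1)) j (fun i => P.coeff i)]
    simp [Finset.mem_range, Nat.lt_succ_iff]
  -- A 0 basic facts
  have hA0cd : (A 0).coeff d = P.coeff d := by rw [hA0c]; simp
  have hA0deg : (A 0).natDegree = d := by
    apply le_antisymm
    · apply natDegree_le_iff_coeff_eq_zero.mpr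
      intro N hN
      rw [hA0c, if_neg (by omega)]
    · exact le_natDegree_of_ne_zero (by rw [hA0cd]; exact had)
  have hWA0 : WG v lam0 (A 0) W0 := by
    intro j
    rw [hA0c]
    by_cases hj : j ≤ d
    · rw [if_pos hj]; exact hWP j
    · rw [if_neg hj, nu_zero]; exact le_top
  -- generic division estimates for our divisors
  have hDIVgen : ∀ Q : K[X], Q.natDegree = d → Q.coeff d = P.coeff d →
      WG v lam0 Q W0 → ∀ S : K[X], ∀ u : ℝ, WG v lam0 S u →
      WG v lam0 (S % Q) u ∧ WG v lam0 (S / Q) (u - W0) := by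
    intro Q h1 h2 h3 S u hS
    have h4 : nu v (Q.coeff d) = ((c:ℝ):EReal) := by rw [h2]; exact hνd
    have h5 : WG v lam0 Q (c - lam0*(d:ℝ)) := by rw [← hW0]; exact h3
    have h6 := WG_mod_div h0d h1 h4 h5 S u hS
    exact ⟨h6.1, WG_mono h6.2 (le_of_eq (by rw [hW0]))⟩
  have hQne : ∀ Q : K[X], Q.coeff d = P.coeff d → Q ≠ 0 := by
    intro Q h2 h0
    rw [h0, coeff_zero] at h2
    exact had h2.symm
  -- the invariant
  have hInv : ∀ i : ℕ,
      (A i).natDegree = d ∧ (A i).coeff d = P.coeff d ∧ WG v lam0 (A i) W0 ∧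
      WG v lam0 (P % A i) (W0 + η i) ∧
      WG v lam0 ((1 - V i * (P / A i)) % A i) (η i) ∧ WG v lam0 (V i) 0 := by
    intro i
    induction i with
    | zero =>
      have hA0ne : A 0 ≠ 0 := hQne (A 0) hA0cd
      have hPT : P = (P - A 0) + (A 0) * 1 := by ring
      have hT : WG v lam0 (P - A 0) (W0 + η 0) := by
        intro j
        rw [coeff_sub, hA0c]
        by_cases hj : j ≤ d
        · rw [if_pos hj, sub_self, nu_zero]; exact le_top
        · rw [if_neg hj, sub_zero]
          refine le_trans ?_ (hM2 j (by omega))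
          apply EReal.coe_le_coe_iff.mpr
          have hη0 : η 0 = Δ := by simp only [hη]; norm_num
          rw [hη0]
      have hmod0 : P % A 0 = (P - A 0) % A 0 := by
        nth_rewrite 1 [hPT]; exact mod_add_mul_self hA0ne
      have hdiv0 : P / A 0 = (P - A 0) / A 0 + 1 := by
        nth_rewrite 1 [hPT]; exact div_add_mul_self hA0ne
      refine ⟨hA0deg, hA0cd, hWA0, ?_, ?_, ?_⟩
      · rw [hmod0]
        exact (hDIVgen (A 0) hA0deg hA0cd hWA0 _ _ hT).1
      · have hseq : (1:K[X]) - V 0 * (P / A 0) = -((P - A 0) / A 0) := by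
          rw [hV0, one_mul, hdiv0]; ring
        rw [hseq]
        have hWTdiv : WG v lam0 ((P - A 0) / A 0) ((W0 + η 0) - W0) :=
          (hDIVgen (A 0) hA0deg hA0cd hWA0 _ _ hT).2
        exact (hDIVgen (A 0) hA0deg hA0cd hWA0 _ _
          (WG_neg (WG_mono hWTdiv (le_of_eq (by ring))))).1
      · rw [hV0]; exact WG_one lam0
    | succ i IH =>
      obtain ⟨hdegA, hcoefA, hWA, hWr, hWs, hWV⟩ := IH
      have hAne : A i ≠ 0 := hQne _ hcoefA
      have hDIV := hDIVgen (A i) hdegA hcoefA hWA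
      have e1 : P = A i * (P / A i) + P % A i := (EuclideanDomain.div_add_mod P (A i)).symm
      have hWB : WG v lam0 (P / A i) 0 := WG_mono (hDIV P W0 hWP).2 (le_of_eq (by ring))
      have hVP : V i * P = V i * (P % A i) + A i * (V i * (P / A i)) := by
        nth_rewrite 1 [e1]; ring
      have hh : (V i * P) % A i = (V i * (P % A i)) % A i := by
        rw [hVP]; exact mod_add_mul_self hAne
      have hWVr : WG v lam0 (V i * (P % A i)) (W0 + η i) :=
        WG_mono (WG_mul hWV hWr) (le_of_eq (by ring))
      have hWh : WG v lam0 ((V i * P) % A i) (W0 + η i) := by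
        rw [hh]; exact (hDIV _ _ hWVr).1
      have hhdeg : ((V i * P) % A i).degree < (d : WithBot ℕ) := by
        have h8 : ((V i * P) % A i).degree < (A i).degree := EuclideanDomain.mod_lt _ hAne
        rwa [degree_eq_natDegree hAne, hdegA] at h8
      have hA'eq := hArec i
      have hcoefA' : (A (i+1)).coeff d = P.coeff d := by
        rw [hA'eq, coeff_add, coeff_eq_zero_of_degree_lt hhdeg, add_zero, hcoefA]
      have hA'ne : A (i+1) ≠ 0 := hQne _ hcoefA'
      have hdegA' : (A (i+1)).natDegree = d := by
        apply le_antisymm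
        · apply natDegree_le_iff_coeff_eq_zero.mpr
          intro N hN
          have hz1 : (A i).coeff N = 0 :=
            coeff_eq_zero_of_natDegree_lt (by omega)
          have hz2 : ((V i * P) % A i).coeff N = 0 :=
            coeff_eq_zero_of_degree_lt (lt_trans hhdeg (by exact_mod_cast hN))
          rw [hA'eq, coeff_add, hz1, hz2, add_zero]
        · exact le_natDegree_of_ne_zero (by rw [hcoefA']; exact had)
      have hWA' : WG v lam0 (A (i+1)) W0 := by
        rw [hA'eq]; exact WG_add hWA (WG_mono hWh (by linarith [hηpos i]))
      have hDIV' := hDIVgen (A (i+1)) hdegA' hcoefA' hWA'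
      -- abbreviations
      set r := P % A i with hrdef
      set B := P / A i with hBdef
      set s := (1 - V i * B) % A i with hsdef
      set q1 := (V i * r) / A i with hq1def
      set q2 := (1 - V i * B) / A i with hq2def
      set h0 := (V i * P) % A i with hh0def
      set B' := P / A (i+1) with hB'def
      have e2 : V i * r = A i * q1 + h0 := by
        rw [hh]; exact (EuclideanDomain.div_add_mod (V i * r) (A i)).symm
      have e3 : (1:K[X]) - V i * B = A i * q2 + s :=
        (EuclideanDomain.div_add_mod _ _).symm
      have hWq2 : WG v lam0 q2 (0 - W0) :=
        (hDIV _ 0 (WG_sub (WG_one lam0)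
          (WG_mono (WG_mul hWV hWB) (le_of_eq (by ring))))).2
      have hWq1 : WG v lam0 q1 (η i) :=
        WG_mono (hDIV _ _ hWVr).2 (le_of_eq (by ring))
      have hbig : P = A (i+1) * (B + r * q2 + q1 * B) + (r * s - h0 * (r*q2 + q1*B)) := by
        linear_combination e1 + B * e2 + r * e3 - (B + r*q2 + q1*B) * hA'eq
      have hWR0 : WG v lam0 (r * s - h0 * (r*q2 + q1*B)) ((W0 + η i) + η i) :=
        WG_sub (WG_mul hWr hWs)
          (WG_mul hWh (WG_add (WG_mono (WG_mul hWr hWq2) (le_of_eq (by ring)))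
                              (WG_mono (WG_mul hWq1 hWB) (le_of_eq (by ring)))))
      have hη' : η (i+1) ≤ η i + η i := by
        simp only [hη]; push_cast; nlinarith [hΔ]
      have hWr' : WG v lam0 (P % A (i+1)) (W0 + η (i+1)) := by
        have h9 : P % A (i+1) = (r * s - h0 * (r*q2 + q1*B)) % A (i+1) := by
          nth_rewrite 1 [hbig]; rw [add_comm]; exact mod_add_mul_self hA'ne
        rw [h9]
        exact (hDIV' _ _ (WG_mono hWR0 (by linarith))).1
      have hWB' : WG v lam0 B' 0 := WG_mono (hDIV' P W0 hWP).2 (le_of_eq (by ring))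
      have e6 : P = A (i+1) * B + (r - h0 * B) := by
        linear_combination e1 - B * hA'eq
      have e5 : P = A (i+1) * B' + P % A (i+1) :=
        (EuclideanDomain.div_add_mod P (A (i+1))).symm
      have hD : A (i+1) * (B' - B) = (r - h0 * B) - P % A (i+1) := by
        linear_combination -e5 + e6
      have hWrhb : WG v lam0 ((r - h0 * B) - P % A (i+1)) (W0 + η i) :=
        WG_sub (WG_sub hWr (WG_mono (WG_mul hWh hWB) (le_of_eq (by ring))))
               (WG_mono hWr' (by have := hηmono i (i+1) (by omega); linarith))
      have hBBdiv : ((r - h0*B) - P % A (i+1)) / A (i+1) = B' - B := by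
        refine (divmod_unique (r := 0) (q := B' - B) hA'ne ?_ ?_).1
        · linear_combination -hD
        · rw [degree_zero, degree_eq_natDegree hA'ne, hdegA']
          exact WithBot.bot_lt_coe d
      have hWD : WG v lam0 (B' - B) (η i) := by
        rw [← hBBdiv]
        exact WG_mono (hDIV' _ _ hWrhb).2 (le_of_eq (by ring))
      have hV' : V (i+1) = (2 * V i - V i ^ 2 * B') % A (i+1) := by
        rw [hVrec i, hB'def]
      have hWG' : WG v lam0 (2 * V i - V i ^ 2 * B') 0 := by
        have h2V : (2:K[X]) * V i = V i + V i := by ring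
        have hsq : V i ^ 2 = V i * V i := sq (V i)
        rw [h2V, hsq]
        exact WG_sub (WG_add hWV hWV)
          (WG_mono (WG_mul (WG_mul hWV hWV) hWB') (le_of_eq (by ring)))
      have hWV' : WG v lam0 (V (i+1)) 0 := by rw [hV']; exact (hDIV' _ _ hWG').1
      set q3 := (2 * V i - V i ^ 2 * B') / A (i+1) with hq3def
      have f1 : A (i+1) * q3 + V (i+1) = 2 * V i - V i ^ 2 * B' := by
        rw [hV']; exact EuclideanDomain.div_add_mod _ _
      set u1 := s - h0 * q2 - V i * (B' - B) with hu1def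
      have hS2 : (1:K[X]) - V i * B' = u1 + A (i+1) * q2 := by
        linear_combination e3 - q2 * hA'eq
      have big2 : (1:K[X]) - V (i+1) * B' =
          u1^2 + A (i+1) * (q3 * B' + 2*u1*q2 + A (i+1) * q2^2) := by
        linear_combination (-B') * f1 + ((1 - V i * B') + u1 + A (i+1) * q2) * hS2
      have hs'eq : ((1:K[X]) - V (i+1) * B') % A (i+1) = (u1^2) % A (i+1) := by
        rw [big2]; exact mod_add_mul_self hA'ne
      have hWu1 : WG v lam0 u1 (η i) := by
        refine WG_sub (WG_sub hWs ?_) ?_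
        · exact WG_mono (WG_mul hWh hWq2) (le_of_eq (by ring))
        · exact WG_mono (WG_mul hWV hWD) (le_of_eq (by ring))
      have hWu1sq : WG v lam0 (u1^2) (η i + η i) := by
        rw [sq]; exact WG_mul hWu1 hWu1
      have hWs' : WG v lam0 (((1:K[X]) - V (i+1) * B') % A (i+1)) (η (i+1)) := by
        rw [hs'eq]
        exact (hDIV' _ _ (WG_mono hWu1sq (by linarith))).1
      exact ⟨hdegA', hcoefA', hWA', hWr', hWs', hWV'⟩
  -- increments are small
  have hWdiff : ∀ i : ℕ, WG v lam0 (A (i+1) - A i) (W0 + η i) := by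
    intro i
    obtain ⟨hdegA, hcoefA, hWA, hWr, hWs, hWV⟩ := hInv i
    have hAne : A i ≠ 0 := hQne _ hcoefA
    have hDIV := hDIVgen (A i) hdegA hcoefA hWA
    have e1 : P = A i * (P / A i) + P % A i := (EuclideanDomain.div_add_mod P (A i)).symm
    have hVP : V i * P = V i * (P % A i) + A i * (V i * (P / A i)) := by
      nth_rewrite 1 [e1]; ring
    have hh : (V i * P) % A i = (V i * (P % A i)) % A i := by
      rw [hVP]; exact mod_add_mul_self hAne
    have hWVr : WG v lam0 (V i * (P % A i)) (W0 + η i) :=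
      WG_mono (WG_mul hWV hWr) (le_of_eq (by ring))
    have hWh : WG v lam0 ((V i * P) % A i) (W0 + η i) := by
      rw [hh]; exact (hDIV _ _ hWVr).1
    rw [hArec i, add_sub_cancel_left]
    exact hWh
  -- Cauchy property
  have hWg3 : ∀ q p : ℕ, q ≤ p → WG v lam0 (A p - A q) (W0 + η q) := by
    intro q p hqp
    induction p, hqp using Nat.le_induction with
    | base => rw [sub_self]; exact WG_zero _ _
    | succ p hqp ih =>
      have hstep : WG v lam0 (A (p+1) - A p) (W0 + η q) :=
        WG_mono (hWdiff p) (by have := hηmono q p hqp; linarith)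
      have hsplit : A (p+1) - A q = (A (p+1) - A p) + (A p - A q) := by ring
      rw [hsplit]
      exact WG_add hstep ih
  have hcau : ∀ j : ℕ, ∀ M : ℤ, ∃ N : ℕ, ∀ p ≥ N, ∀ q ≥ N,
      (M:WithTop ℤ) ≤ v ((fun i => (A i).coeff j) p - (fun i => (A i).coeff j) q) := by
    intro j M
    obtain ⟨N, hN⟩ := exists_nat_ge ((M - W0 - lam0*(j:ℝ))/Δ)
    have key : ∀ p q : ℕ, N ≤ q → q ≤ p →
        (M:WithTop ℤ) ≤ v ((A p).coeff j - (A q).coeff j) := by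
      intro p q hq hqp
      have h1 := hWg3 q p hqp j
      rw [coeff_sub] at h1
      rw [← int_le_toE]
      refine le_trans ?_ h1
      apply EReal.coe_le_coe_iff.mpr
      have hNq : (N:ℝ) ≤ (q:ℝ) + 1 := by
        have : (N:ℝ) ≤ q := by exact_mod_cast hq
        linarith
      have h2 := (div_le_iff₀ hΔ).mp hN
      have h3 : η q = Δ * ((q:ℝ)+1) := by simp only [hη]
      nlinarith [hΔ]
    refine ⟨N, fun p hp q hq => ?_⟩
    simp only
    rcases le_total q p with h | h
    · exact key p q hq h
    · have h5 := key q p hp h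
      rw [show (A p).coeff j - (A q).coeff j = -((A q).coeff j - (A p).coeff j) from by ring,
        v.map_neg]
      exact h5
  have hlex : ∀ j : ℕ, ∃ lj : K, ∀ M : ℤ, ∃ N, ∀ p ≥ N,
      (M:WithTop ℤ) ≤ v ((A p).coeff j - lj) :=
    fun j => hcomplete _ (hcau j)
  choose l hlspec using hlex
  -- the limit polynomial
  set Ainf : K[X] := (∑ j ∈ Finset.range d, C (l j) * X ^ j) + C (P.coeff d) * X ^ d
    with hAinfdef
  have hAinfc : ∀ j, Ainf.coeff j = if j < d then l j else if j = d then P.coeff d else 0 := by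
    intro j
    rw [hAinfdef, coeff_add, finset_sum_coeff]
    simp only [coeff_C_mul, coeff_X_pow, mul_ite, mul_one, mul_zero]
    rw [Finset.sum_ite_eq (Finset.range d) j (fun i => l i)]
    by_cases h1 : j < d
    · rw [if_pos (Finset.mem_range.mpr h1), if_pos h1, if_neg (by omega), add_zero]
    · rw [if_neg (fun hc => h1 (Finset.mem_range.mp hc)), if_neg h1, zero_add]
  have hAinfcd : Ainf.coeff d = P.coeff d := by
    rw [hAinfc]
    simp
  have hAconv : ∀ j : ℕ, ∀ M : ℤ, ∃ N, ∀ p ≥ N,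
      (M:WithTop ℤ) ≤ v ((A p - Ainf).coeff j) := by
    intro j M
    by_cases h1 : j < d
    · obtain ⟨N, hN⟩ := hlspec j M
      exact ⟨N, fun p hp => by rw [coeff_sub, hAinfc j, if_pos h1]; exact hN p hp⟩
    · refine ⟨0, fun p hp => ?_⟩
      rw [coeff_sub, hAinfc j, if_neg h1]
      by_cases h2 : j = d
      · rw [if_pos h2, h2, (hInv p).2.1, sub_self, v.map_zero]; exact le_top
      · rw [if_neg h2]
        have h3 : (A p).coeff j = 0 := coeff_eq_zero_of_natDegree_lt (by rw [(hInv p).1]; omega)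
        rw [h3, sub_zero, v.map_zero]; exact le_top
  have hAinfdeg : Ainf.natDegree = d := by
    apply le_antisymm
    · apply natDegree_le_iff_coeff_eq_zero.mpr
      intro N hN
      rw [hAinfc, if_neg (by omega), if_neg (by omega)]
    · exact le_natDegree_of_ne_zero (by rw [hAinfcd]; exact had)
  have hAinfne : Ainf ≠ 0 := hQne _ hAinfcd
  have hνAinfd : nu v (Ainf.coeff d) = ((c:ℝ):EReal) := by rw [hAinfcd]; exact hνd
  have hWAinf : WG v lam0 Ainf W0 := by
    intro j
    rcases lt_trichotomy j d with h1 | h1 | h1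
    · rw [hAinfc, if_pos h1]
      obtain ⟨M, hM⟩ := exists_int_gt (W0 + lam0*(j:ℝ))
      obtain ⟨N, hN⟩ := hlspec j M
      have hval := hN N (le_refl N)
      have h3 : ((W0 + lam0*(j:ℝ):ℝ):EReal) ≤ nu v ((A N).coeff j) := (hInv N).2.2.1 j
      have h4 : ((W0 + lam0*(j:ℝ):ℝ):EReal) ≤ nu v (-((A N).coeff j - l j)) := by
        rw [nu_neg]
        refine le_trans ?_ ((int_le_toE M _).mpr hval)
        exact EReal.coe_le_coe_iff.mpr hM.le
      have h5 := le_trans (le_min h3 h4) (min_le_nu_add v ((A N).coeff j) (-((A N).coeff j - l j)))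
      rwa [show (A N).coeff j + -((A N).coeff j - l j) = l j from by ring] at h5
    · rw [hAinfc, if_neg (by omega), if_pos h1, h1]
      refine le_trans (le_of_eq ?_) (le_of_eq hνd.symm)
      rw [hW0]; norm_num
    · rw [hAinfc, if_neg (by omega), if_neg (by omega), nu_zero]
      exact le_top
  have hDIVinf := hDIVgen Ainf hAinfdeg hAinfcd hWAinf
  have hWg : ∀ i, WG v lam0 (A i - Ainf) (W0 + η i) := by
    intro i j
    obtain ⟨M, hM⟩ := exists_int_gt (W0 + η i + lam0*(j:ℝ))
    obtain ⟨N, hN⟩ := hAconv j M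
    set p := max i N with hp
    have hval := hN p (le_max_right _ _)
    have h3 : ((W0 + η i + lam0*(j:ℝ):ℝ):EReal) ≤ nu v (-((A p - A i).coeff j)) := by
      rw [nu_neg]
      exact hWg3 i p (le_max_left _ _) j
    have h4 : ((W0 + η i + lam0*(j:ℝ):ℝ):EReal) ≤ nu v ((A p - Ainf).coeff j) := by
      refine le_trans ?_ ((int_le_toE M _).mpr hval)
      exact EReal.coe_le_coe_iff.mpr hM.le
    have h5 := le_trans (le_min h3 h4)
      (min_le_nu_add v (-((A p - A i).coeff j)) ((A p - Ainf).coeff j))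
    rwa [show -((A p - A i).coeff j) + (A p - Ainf).coeff j = (A i - Ainf).coeff j from by
      rw [coeff_sub, coeff_sub, coeff_sub]; ring] at h5
  -- divisibility
  have hWBi : ∀ i, WG v lam0 (P / A i) 0 := fun i =>
    WG_mono ((hDIVgen (A i) (hInv i).1 (hInv i).2.1 (hInv i).2.2.1) P W0 hWP).2
      (le_of_eq (by ring))
  have hmodAinf : ∀ i, WG v lam0 (P % Ainf) (W0 + η i) := by
    intro i
    have hid : P = ((A i - Ainf) * (P / A i) + P % A i) + Ainf * (P / A i) := by
      linear_combination -EuclideanDomain.div_add_mod P (A i)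
    have h9 : P % Ainf = ((A i - Ainf) * (P / A i) + P % A i) % Ainf := by
      nth_rewrite 1 [hid]; exact mod_add_mul_self hAinfne
    rw [h9]
    exact (hDIVinf _ _ (WG_add (WG_mono (WG_mul (hWg i) (hWBi i)) (le_of_eq (by ring)))
      ((hInv i).2.2.2.1))).1
  have hPmodzero : P % Ainf = 0 := by
    apply Polynomial.ext
    intro j
    rw [coeff_zero]
    have htop : nu v ((P % Ainf).coeff j) = ⊤ := by
      apply ereal_eq_top_of_forall_real
      intro ρ
      obtain ⟨i, hi⟩ := exists_nat_ge ((ρ - W0 - lam0*(j:ℝ))/Δ)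
      refine le_trans ?_ (hmodAinf i j)
      apply EReal.coe_le_coe_iff.mpr
      have h2 := (div_le_iff₀ hΔ).mp hi
      have h3 : η i = Δ * ((i:ℝ)+1) := by simp only [hη]
      nlinarith [hΔ]
    exact (nu_eq_top_iff v _).mp htop
  have hdvd : Ainf ∣ P := EuclideanDomain.mod_eq_zero.mp hPmodzero
  have hPfac : P = Ainf * (P / Ainf) := by
    have h9 := EuclideanDomain.div_add_mod P Ainf
    rw [hPmodzero, add_zero] at h9
    exact h9.symm
  set Binf := P / Ainf with hBinfdef
  have hBinfne : Binf ≠ 0 := fun h0 => hP (by rw [hPfac, h0, mul_zero])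
  have hBinfdeg : d + Binf.natDegree = P.natDegree := by
    conv_rhs => rw [hPfac]
    rw [natDegree_mul hAinfne hBinfne, hAinfdeg]
  have hM2k : ∀ k : ℕ, ((c + lam1 * (k:ℝ) : ℝ):EReal) ≤ nu v (P.coeff (d + k)) := by
    intro k
    refine le_trans (le_of_eq ?_) (M2bound hdn' hd hright (d+k))
    congr 1
    push_cast
    ring
  have hB1 : ∀ k : ℕ, ((lam1*(k:ℝ):ℝ):EReal) ≤ nu v (Binf.coeff k) := by
    have key : ∀ m : ℕ, ∀ k : ℕ, P.natDegree - d - k < m →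
        ((lam1*(k:ℝ):ℝ):EReal) ≤ nu v (Binf.coeff k) := by
      intro m
      induction m with
      | zero => intro k hk; exact absurd hk (Nat.not_lt_zero _)
      | succ m ih =>
        intro k hk
        by_cases hkbig : P.natDegree - d < k
        · have h2 : Binf.natDegree < k := by omega
          rw [coeff_eq_zero_of_natDegree_lt h2, nu_zero]; exact le_top
        · have hPk : P.coeff (d + k) =
              ∑ x ∈ Finset.HasAntidiagonal.antidiagonal (d+k), Ainf.coeff x.1 * Binf.coeff x.2 := by
            nth_rewrite 1 [hPfac]
            exact coeff_mul _ _ _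
          have hmem : ((d, k) : ℕ × ℕ) ∈ Finset.HasAntidiagonal.antidiagonal (d+k) :=
            Finset.HasAntidiagonal.mem_antidiagonal.mpr rfl
          have hsplit : P.coeff (d+k) = Ainf.coeff d * Binf.coeff k +
              ∑ x ∈ (Finset.HasAntidiagonal.antidiagonal (d+k)).erase (d,k),
                Ainf.coeff x.1 * Binf.coeff x.2 := by
            rw [hPk, ← Finset.add_sum_erase _ _ hmem]
          have hrest : ((c + lam1*(k:ℝ) + Δ:ℝ):EReal) ≤
              nu v (∑ x ∈ (Finset.HasAntidiagonal.antidiagonal (d+k)).erase (d,k),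
                Ainf.coeff x.1 * Binf.coeff x.2) := by
            refine le_nu_sum v _ ?_
            rintro ⟨i1, k1⟩ hx
            obtain ⟨hne, hmem1⟩ := Finset.mem_erase.mp hx
            have hsum : i1 + k1 = d + k := Finset.HasAntidiagonal.mem_antidiagonal.mp hmem1
            rcases lt_trichotomy i1 d with h1 | h1 | h1
            · have hk1 : k < k1 := by omega
              have hih : ((lam1*(k1:ℝ):ℝ):EReal) ≤ nu v (Binf.coeff k1) := by
                by_cases hbig : P.natDegree - d < k1
                · rw [coeff_eq_zero_of_natDegree_lt (by omega), nu_zero]; exact le_top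
                · exact ih k1 (by omega)
              have hA1 := hWAinf i1
              rw [nu_mul]
              have h6 := add_le_add hA1 hih
              rw [← EReal.coe_add] at h6
              refine le_trans ?_ h6
              apply EReal.coe_le_coe_iff.mpr
              have hc1 : (i1:ℝ) + k1 = (d:ℝ) + k := by exact_mod_cast hsum
              have hc2 : (i1:ℝ) + 1 ≤ (d:ℝ) := by exact_mod_cast h1
              rw [hW0, hΔdef]
              have h8 : (0:ℝ) ≤ (lam1 - lam0) * ((d:ℝ) - i1 - 1) :=
                mul_nonneg (by linarith) (by linarith)
              have h9 : lam1*((i1:ℝ)+k1) = lam1*((d:ℝ)+k) := by rw [hc1]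
              have h9' : lam0*((i1:ℝ)+k1) = lam0*((d:ℝ)+k) := by rw [hc1]
              nlinarith [h8, h9, h9']
            · exfalso
              apply hne
              have h5 : k1 = k := by omega
              rw [h1, h5]
            · have h7 : Ainf.coeff i1 = 0 :=
                coeff_eq_zero_of_natDegree_lt (by rw [hAinfdeg]; omega)
              rw [h7, zero_mul, nu_zero]; exact le_top
          have hmain : ((c + lam1*(k:ℝ):ℝ):EReal) ≤ nu v (Ainf.coeff d * Binf.coeff k) := by
            have h9 : Ainf.coeff d * Binf.coeff k = P.coeff (d+k) +
                -(∑ x ∈ (Finset.HasAntidiagonal.antidiagonal (d+k)).erase (d,k),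
                  Ainf.coeff x.1 * Binf.coeff x.2) := by
              rw [hsplit]; ring
            rw [h9]
            refine le_trans (le_min (hM2k k) ?_) (min_le_nu_add v _ _)
            rw [nu_neg]
            refine le_trans ?_ hrest
            exact EReal.coe_le_coe_iff.mpr (by linarith)
          rw [nu_mul, hνAinfd] at hmain
          refine ereal_le_add_coe (r := c) ?_
          rw [add_comm (nu v (Binf.coeff k)) ((c:ℝ):EReal)]
          refine le_trans (le_of_eq ?_) hmain
          congr 1
          ring
    exact fun k => key (P.natDegree - d - k + 1) k (Nat.lt_succ_self _)
  have hB0 : nu v (Binf.coeff 0) = ((0:ℝ):EReal) := by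
    have hPk : P.coeff d = ∑ x ∈ Finset.HasAntidiagonal.antidiagonal d, Ainf.coeff x.1 * Binf.coeff x.2 := by
      nth_rewrite 1 [hPfac]
      rw [show Finset.HasAntidiagonal.antidiagonal d = Finset.HasAntidiagonal.antidiagonal (d + 0) from by rw [Nat.add_zero]]
      exact coeff_mul _ _ _
    have hmem : ((d, 0) : ℕ × ℕ) ∈ Finset.HasAntidiagonal.antidiagonal d := Finset.HasAntidiagonal.mem_antidiagonal.mpr rfl
    have hsplit : P.coeff d = Ainf.coeff d * Binf.coeff 0 +
        ∑ x ∈ (Finset.HasAntidiagonal.antidiagonal d).erase (d,0), Ainf.coeff x.1 * Binf.coeff x.2 := by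
      rw [hPk, ← Finset.add_sum_erase _ _ hmem]
    have hrest : ((c + Δ:ℝ):EReal) ≤ nu v (∑ x ∈ (Finset.HasAntidiagonal.antidiagonal d).erase (d,0),
        Ainf.coeff x.1 * Binf.coeff x.2) := by
      refine le_nu_sum v _ ?_
      rintro ⟨i1, k1⟩ hx
      obtain ⟨hne, hmem1⟩ := Finset.mem_erase.mp hx
      have hsum : i1 + k1 = d := Finset.HasAntidiagonal.mem_antidiagonal.mp hmem1
      rcases lt_trichotomy i1 d with h1 | h1 | h1
      · have hk1 : 1 ≤ k1 := by omega
        have h6 := add_le_add (hWAinf i1) (hB1 k1)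
        rw [nu_mul]
        rw [← EReal.coe_add] at h6
        refine le_trans ?_ h6
        apply EReal.coe_le_coe_iff.mpr
        have hc1 : (i1:ℝ) + k1 = (d:ℝ) := by exact_mod_cast hsum
        have hc3 : (1:ℝ) ≤ (k1:ℝ) := by exact_mod_cast hk1
        rw [hW0, hΔdef]
        have h8 : (0:ℝ) ≤ (lam1 - lam0) * ((k1:ℝ) - 1) :=
          mul_nonneg (by linarith) (by linarith)
        have h9 : lam0*((i1:ℝ)+k1) = lam0*(d:ℝ) := by rw [hc1]
        linarith [h8, h9]
      · exfalso
        apply hne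
        have h5 : k1 = 0 := by omega
        rw [h1, h5]
      · have h7 : Ainf.coeff i1 = 0 :=
          coeff_eq_zero_of_natDegree_lt (by rw [hAinfdeg]; omega)
        rw [h7, zero_mul, nu_zero]; exact le_top
    have h9 : Ainf.coeff d * Binf.coeff 0 = P.coeff d +
        -(∑ x ∈ (Finset.HasAntidiagonal.antidiagonal d).erase (d,0), Ainf.coeff x.1 * Binf.coeff x.2) := by
      rw [hsplit]; ring
    have hlt2 : nu v (P.coeff d) < nu v (-(∑ x ∈ (Finset.HasAntidiagonal.antidiagonal d).erase (d,0),
        Ainf.coeff x.1 * Binf.coeff x.2)) := by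
      rw [nu_neg, hνd]
      exact lt_of_lt_of_le (EReal.coe_lt_coe_iff.mpr (by linarith)) hrest
    have hmainval : nu v (Ainf.coeff d * Binf.coeff 0) = ((c:ℝ):EReal) := by
      rw [h9, nu_add_eq_left v hlt2, hνd]
    rw [nu_mul, hνAinfd] at hmainval
    exact ereal_coe_add_eq_self hmainval
  -- a helper: NF is bounded below by the λ₀-line
  have hL0NF : ∀ x : ℝ, ((c + lam0 * (x - (d:ℝ)) : ℝ):EReal) ≤ NF v P x := by
    intro x
    have hm : ∀ t : ℕ, t ≤ P.natDegree →
        ((lam0 * (t:ℝ) + (c - lam0 * d) : ℝ):EReal) ≤ nu v (P.coeff t) := by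
      intro t ht
      refine le_trans (le_of_eq ?_) (M1bound h0d hdn' hd hleft t)
      congr 1
      ring
    refine le_trans (le_of_eq ?_) (minorant_le_NF (v := v) x hm)
    congr 1
    ring
  -- CLAIM B : the Newton function of P bounds the coefficients of Ainf below degree d
  have hCB : ∀ j : ℕ, j ≤ d → NF v P (j:ℝ) ≤ nu v (Ainf.coeff j) := by
    by_contra hcon
    push_neg at hcon
    obtain ⟨j0, hj0d, hj0⟩ := hcon
    by_cases hcaseA : ∃ j, j ≤ d ∧ NF v P (j:ℝ) = ⊤ ∧ Ainf.coeff j ≠ 0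
    · -- case (a) : some coefficient above the infinite part of NF
      obtain ⟨hjsd, hjstop, hjsne⟩ := Nat.find_spec hcaseA
      set js := Nat.find hcaseA with hjsdef
      have hPjs : P.coeff js = 0 := by
        have h1 : NF v P (js:ℝ) ≤ nu v (P.coeff js) := NF_le_nu (le_trans hjsd hdn')
        rw [hjstop] at h1
        exact (nu_eq_top_iff v _).mp (top_le_iff.mp h1)
      have hAzero : ∀ i, i < js → Ainf.coeff i = 0 := by
        intro i hi
        by_contra hne0
        have hNFi : NF v P (i:ℝ) = ⊤ := by
          by_contra hnt
          have h2 := chord_max (v := v) (i := i) (j := js) (le_of_lt hi)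
            (by exact_mod_cast hjsd) hd
          rw [hjstop, top_le_iff] at h2
          rcases max_cases (NF v P (i:ℝ)) ((c:ℝ):EReal) with ⟨hmax, _⟩ | ⟨hmax, _⟩ <;>
            rw [hmax] at h2
          · exact hnt h2
          · exact absurd h2 (by simp)
        exact (Nat.find_min hcaseA hi) ⟨by omega, hNFi, hne0⟩
      have hPk : P.coeff js = ∑ x ∈ Finset.HasAntidiagonal.antidiagonal js,
          Ainf.coeff x.1 * Binf.coeff x.2 := by
        nth_rewrite 1 [hPfac]
        exact coeff_mul _ _ _
      have hmem : ((js, 0) : ℕ × ℕ) ∈ Finset.HasAntidiagonal.antidiagonal js := Finset.HasAntidiagonal.mem_antidiagonal.mpr rfl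
      have hzero : ∀ x ∈ (Finset.HasAntidiagonal.antidiagonal js).erase (js, 0),
          Ainf.coeff x.1 * Binf.coeff x.2 = 0 := by
        rintro ⟨i1, k1⟩ hx
        obtain ⟨hne, hmem1⟩ := Finset.mem_erase.mp hx
        have hsum : i1 + k1 = js := Finset.HasAntidiagonal.mem_antidiagonal.mp hmem1
        have hi1 : i1 < js := by
          rcases Nat.lt_or_ge i1 js with h | h
          · exact h
          · exfalso
            apply hne
            have h5 : i1 = js := by omega
            have h6 : k1 = 0 := by omega
            rw [h5, h6]
        rw [hAzero i1 hi1, zero_mul]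
      have hsum0 : P.coeff js = Ainf.coeff js * Binf.coeff 0 := by
        rw [hPk, ← Finset.add_sum_erase _ _ hmem, Finset.sum_eq_zero hzero, add_zero]
      have hB0ne : Binf.coeff 0 ≠ 0 := by
        intro h0
        rw [h0, nu_zero] at hB0
        exact absurd hB0 (by simp)
      apply hjsne
      have h7 : Ainf.coeff js * Binf.coeff 0 = 0 := by rw [← hsum0, hPjs]
      rcases mul_eq_zero.mp h7 with h | h
      · exact h
      · exact absurd h hB0ne
    · -- case (b) : all deficits are finite
      push_neg at hcaseA
      set S := (Finset.range (d+1)).filter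
        (fun j => nu v (Ainf.coeff j) < NF v P (j:ℝ)) with hSdef
      have hj0S : j0 ∈ S := Finset.mem_filter.mpr ⟨Finset.mem_range.mpr (by omega), hj0⟩
      have hSfacts : ∀ j ∈ S, NF v P (j:ℝ) ≠ ⊤ ∧ nu v (Ainf.coeff j) ≠ ⊤ ∧
          NF v P (j:ℝ) ≠ ⊥ ∧ nu v (Ainf.coeff j) ≠ ⊥ := by
        intro j hj
        obtain ⟨hjr, hjlt⟩ := Finset.mem_filter.mp hj
        have hjd : j ≤ d := by
          have := Finset.mem_range.mp hjr
          omega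
        refine ⟨?_, ne_top_of_lt hjlt, ?_, nu_ne_bot v _⟩
        · intro htop
          rw [hcaseA j hjd htop, nu_zero] at hjlt
          exact absurd hjlt (by simp)
        · intro hbot
          have := hL0NF (j:ℝ)
          rw [hbot] at this
          exact absurd (le_bot_iff.mp this) (EReal.coe_ne_bot _)
      obtain ⟨js, hjsS, hjsmin⟩ := Finset.exists_min_image S
        (fun j => (nu v (Ainf.coeff j)).toReal - (NF v P (j:ℝ)).toReal) ⟨j0, hj0S⟩
      obtain ⟨hjsT, hjsT', hjsB, hjsB'⟩ := hSfacts js hjsS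
      obtain ⟨hjsr, hjslt⟩ := Finset.mem_filter.mp hjsS
      have hjsd : js ≤ d := by
        have := Finset.mem_range.mp hjsr
        omega
      set pjs := (nu v (Ainf.coeff js)).toReal with hpjsdef
      set fjs := (NF v P (js:ℝ)).toReal with hfjsdef
      have hpjscoe : ((pjs:ℝ):EReal) = nu v (Ainf.coeff js) := EReal.coe_toReal hjsT' hjsB'
      have hfjscoe : ((fjs:ℝ):EReal) = NF v P (js:ℝ) := EReal.coe_toReal hjsT hjsB
      have hmlt : pjs - fjs < 0 := by
        have := hjslt
        rw [← hpjscoe, ← hfjscoe] at this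
        have := EReal.coe_lt_coe_iff.mp this
        linarith
      have hjsnd : js ≠ d := by
        intro h
        subst h
        rw [hAinfcd, hνd, hd] at hjslt
        exact absurd hjslt (lt_irrefl _)
      have hjsltd : js < d := by omega
      -- the sum identity at js
      have hPk : P.coeff js = ∑ x ∈ Finset.HasAntidiagonal.antidiagonal js,
          Ainf.coeff x.1 * Binf.coeff x.2 := by
        nth_rewrite 1 [hPfac]
        exact coeff_mul _ _ _
      have hmem : ((js, 0) : ℕ × ℕ) ∈ Finset.HasAntidiagonal.antidiagonal js := Finset.HasAntidiagonal.mem_antidiagonal.mpr rfl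
      have hsplit : P.coeff js = Ainf.coeff js * Binf.coeff 0 +
          ∑ x ∈ (Finset.HasAntidiagonal.antidiagonal js).erase (js,0), Ainf.coeff x.1 * Binf.coeff x.2 := by
        rw [hPk, ← Finset.add_sum_erase _ _ hmem]
      have hrest : ((pjs + Δ:ℝ):EReal) ≤ nu v (∑ x ∈ (Finset.HasAntidiagonal.antidiagonal js).erase (js,0),
          Ainf.coeff x.1 * Binf.coeff x.2) := by
        refine le_nu_sum v _ ?_
        rintro ⟨i1, k1⟩ hx
        obtain ⟨hne, hmem1⟩ := Finset.mem_erase.mp hx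
        have hsum : i1 + k1 = js := Finset.HasAntidiagonal.mem_antidiagonal.mp hmem1
        have hi1 : i1 < js := by
          rcases Nat.lt_or_ge i1 js with h | h
          · exact h
          · exfalso
            apply hne
            have h5 : i1 = js := by omega
            have h6 : k1 = 0 := by omega
            rw [h5, h6]
        have hk1 : 1 ≤ k1 := by omega
        by_cases htop : NF v P (i1:ℝ) = ⊤
        · rw [hcaseA i1 (by omega) htop, zero_mul, nu_zero]; exact le_top
        · have hfibot : NF v P (i1:ℝ) ≠ ⊥ := by
            intro hbot
            have := hL0NF (i1:ℝ)
            rw [hbot] at this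
            exact absurd (le_bot_iff.mp this) (EReal.coe_ne_bot _)
          set fi := (NF v P (i1:ℝ)).toReal with hfidef
          have hfi : ((fi:ℝ):EReal) = NF v P (i1:ℝ) := EReal.coe_toReal htop hfibot
          have hAi1 : (((pjs - fjs) + fi : ℝ):EReal) ≤ nu v (Ainf.coeff i1) := by
            by_cases hiS : i1 ∈ S
            · have hmin : pjs - fjs ≤
                  (nu v (Ainf.coeff i1)).toReal - (NF v P (i1:ℝ)).toReal :=
                hjsmin i1 hiS
              obtain ⟨_, hnt, _, hnb⟩ := hSfacts i1 hiS
              have hcoe : (((nu v (Ainf.coeff i1)).toReal:ℝ):EReal) = nu v (Ainf.coeff i1) :=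
                EReal.coe_toReal hnt hnb
              rw [← hcoe]
              apply EReal.coe_le_coe_iff.mpr
              rw [hfidef]
              linarith
            · have hge : NF v P (i1:ℝ) ≤ nu v (Ainf.coeff i1) := by
                by_contra hlt3
                exact hiS (Finset.mem_filter.mpr
                  ⟨Finset.mem_range.mpr (by omega), not_le.mp hlt3⟩)
              rw [← hfi] at hge
              refine le_trans ?_ hge
              apply EReal.coe_le_coe_iff.mpr
              linarith
          have hcv := CVX0 (v := v) h0d hdn' hd hleft (le_of_lt hi1) hjsltd hfjscoe.symm
          rw [← hfi] at hcv
          have hfige : fjs - lam0*((js:ℝ)-(i1:ℝ)) ≤ fi := EReal.coe_le_coe_iff.mp hcv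
          have h6 := add_le_add hAi1 (hB1 k1)
          rw [nu_mul]
          rw [← EReal.coe_add] at h6
          refine le_trans ?_ h6
          apply EReal.coe_le_coe_iff.mpr
          have hc1 : (i1:ℝ) + k1 = (js:ℝ) := by exact_mod_cast hsum
          have hc3 : (1:ℝ) ≤ (k1:ℝ) := by exact_mod_cast hk1
          have h8 : (0:ℝ) ≤ (lam1 - lam0) * ((k1:ℝ) - 1) :=
            mul_nonneg (by linarith) (by linarith)
          have h10 : lam0*((js:ℝ)-(i1:ℝ)) = lam0*(k1:ℝ) := by
            rw [← hc1]; ring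
          rw [hΔdef]
          linarith [hfige, h8, h10]
      have hmain : nu v (Ainf.coeff js * Binf.coeff 0) = ((pjs:ℝ):EReal) := by
        rw [nu_mul, hB0, ← hpjscoe, ← EReal.coe_add, add_zero]
      have h9 : P.coeff js = (Ainf.coeff js * Binf.coeff 0) +
          ∑ x ∈ (Finset.HasAntidiagonal.antidiagonal js).erase (js,0), Ainf.coeff x.1 * Binf.coeff x.2 :=
        hsplit
      have hlt4 : nu v (Ainf.coeff js * Binf.coeff 0) <
          nu v (∑ x ∈ (Finset.HasAntidiagonal.antidiagonal js).erase (js,0),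
            Ainf.coeff x.1 * Binf.coeff x.2) := by
        rw [hmain]
        exact lt_of_lt_of_le (EReal.coe_lt_coe_iff.mpr (by linarith)) hrest
      have hPval : nu v (P.coeff js) = ((pjs:ℝ):EReal) := by
        rw [h9, nu_add_eq_left v hlt4, hmain]
      have hfinal := NF_le_nu (v := v) (t := js) (le_trans hjsd hdn')
      rw [hPval, ← hfjscoe] at hfinal
      have := EReal.coe_le_coe_iff.mp hfinal
      linarith
  -- Newton function equality on [0, d]
  have hNFeq : ∀ x ∈ Set.Icc (0:ℝ) (d:ℝ), NF v Ainf x = NF v P x := by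
    rintro x ⟨hx0, hxd⟩
    apply le_antisymm
    · -- NF Ainf ≤ NF P
      refine sSup_le ?_
      rintro y ⟨a, b, hmA, rfl⟩
      rw [hAinfdeg] at hmA
      rcases le_or_gt lam0 a with ha | ha
      · have he : toE (v (Ainf.coeff d)) = ((c:ℝ):EReal) := hνAinfd
        have h2 := hmA d (le_refl d)
        rw [he] at h2
        have h1 : a * (d:ℝ) + b ≤ c := by exact_mod_cast h2
        have h3 : ((a*x+b:ℝ):EReal) ≤ ((c + lam0*(x - (d:ℝ)):ℝ):EReal) := by
          apply EReal.coe_le_coe_iff.mpr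
          nlinarith [mul_nonneg (sub_nonneg.mpr ha) (sub_nonneg.mpr hxd)]
        exact le_trans h3 (hL0NF x)
      · have hmP : ∀ t : ℕ, t ≤ P.natDegree →
            ((a*(t:ℝ)+b:ℝ):EReal) ≤ nu v (P.coeff t) := by
          intro t ht
          have hPt : P.coeff t = ∑ z ∈ Finset.HasAntidiagonal.antidiagonal t,
              Ainf.coeff z.1 * Binf.coeff z.2 := by
            nth_rewrite 1 [hPfac]
            exact coeff_mul _ _ _
          rw [hPt]
          refine le_nu_sum v _ ?_
          rintro ⟨i1, k1⟩ hx1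
          have hsum : i1 + k1 = t := Finset.HasAntidiagonal.mem_antidiagonal.mp hx1
          by_cases hi1d : i1 ≤ d
          · have h5 := add_le_add (hmA i1 hi1d) (hB1 k1)
            rw [nu_mul]
            rw [← EReal.coe_add] at h5
            refine le_trans ?_ h5
            apply EReal.coe_le_coe_iff.mpr
            have hc1 : (i1:ℝ) + k1 = (t:ℝ) := by exact_mod_cast hsum
            have hk1 : (0:ℝ) ≤ (k1:ℝ) := Nat.cast_nonneg k1
            have h12 : a*((i1:ℝ)+(k1:ℝ)) = a*(t:ℝ) := by rw [hc1]
            have h13 : (0:ℝ) ≤ (lam1 - a)*(k1:ℝ) :=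
              mul_nonneg (sub_nonneg.mpr (le_of_lt (lt_trans ha hlt))) hk1
            nlinarith [h12, h13]
          · rw [coeff_eq_zero_of_natDegree_lt (by rw [hAinfdeg]; omega), zero_mul, nu_zero]
            exact le_top
        exact minorant_le_NF (v := v) x hmP
    · -- NF P ≤ NF Ainf
      refine sSup_le ?_
      rintro y ⟨a, b, hmP, rfl⟩
      refine le_sSup ⟨a, b, ?_, rfl⟩
      intro i hi
      rw [hAinfdeg] at hi
      exact le_trans (minorant_le_NF (v := v) (i:ℝ) hmP) (hCB i hi)
  exact ⟨Ainf, hdvd, hAinfdeg, hAinfcd, hNFeq, fun j M => hAconv j M⟩
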